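/- Let K ≥ 1 and consider users i = 1, …, K with real channel gains h_i ≠ 0 and powers P_i > 0, set SNR_i = h_i² P_i and s_i = log₂ SNR_i. Let n₁ ≥ n₂ ≥ … ≥ n_K be natural numbers with n_i ≤ s_i + 1 for every i, and let t_i ≥ 1 be integers with modulation orders m_i = 2 t_i satisfying Σ_{i=j}^{K} m_i ≤ n_j for every j ∈ {1, …, K}. Define E_j = 2^{n₁ − s_j + Σ_{i=j+1}^{K} m_i} · (2^{m_j} − 1)/6 and η = 1/√(max_{1 ≤ j ≤ K} E_j). Then for any two distinct tuples (x₁, …, x_K) ≠ (x'₁, …, x'_K) with x_i, x'_i ∈ Q(t_i, 1), the superimposed constellation points satisfy |Σ_{i=1}^{K} h_i √(P_i) η 2^{(n₁ − s_i + Σ_{i'=i+1}^{K} m_{i'})/2} (x_i − x'_i)| ≥ √3; i.e., the minimum distance of the received superimposed constellation is at least √3. -/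

import Mathlib

noncomputable section

/-- The regular QAM constellation with `4^t` points and minimum distance `δ`. -/
def QAM (t : ℕ) (δ : ℝ) : Set ℂ :=
  { z | ∃ a : ℕ, a < 2 ^ t ∧ ∃ b : ℕ, b < 2 ^ t ∧
      z = (δ : ℂ) * (((a : ℂ) - ((2 : ℂ) ^ t - 1) / 2) +
        ((b : ℂ) - ((2 : ℂ) ^ t - 1) / 2) * Complex.I) }

lemma digits_ne_zero {K : ℕ} (t : Fin K → ℕ) (ε r : Fin K → ℤ)
    (hε : ∀ i, ε i = 1 ∨ ε i = -1) (hr : ∀ i, |r i| < 2 ^ (t i))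
    (i₀ : Fin K) (h0 : r i₀ ≠ 0) (hmax : ∀ i, i₀ < i → r i = 0) :
    (∑ i, ε i * 2 ^ (∑ i' ∈ Finset.Ioi i, t i') * r i) ≠ 0 := by
  set T : Fin K → ℕ := fun i => ∑ i' ∈ Finset.Ioi i, t i' with hT
  intro hsum
  have hdvd : ∀ i ∈ Finset.univ.erase i₀, (2:ℤ) ^ (T i₀ + t i₀) ∣ ε i * 2 ^ (T i) * r i := by
    intro i hi
    rcases lt_or_gt_of_ne (Finset.ne_of_mem_erase hi) with hlt | hgt
    · have hsub : insert i₀ (Finset.Ioi i₀) ⊆ Finset.Ioi i := by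
        intro k hk
        simp only [Finset.mem_insert, Finset.mem_Ioi] at hk ⊢
        rcases hk with rfl | hk
        · exact hlt
        · exact hlt.trans hk
      have hTle : T i₀ + t i₀ ≤ T i := by
        have := Finset.sum_le_sum_of_subset hsub (f := t)
        rwa [Finset.sum_insert (by simp), add_comm] at this
      exact dvd_mul_of_dvd_left (Dvd.dvd.mul_left (pow_dvd_pow 2 hTle) _) _
    · simp [hmax i hgt]
  have h1 : (2:ℤ) ^ (T i₀ + t i₀) ∣ ∑ i ∈ Finset.univ.erase i₀, ε i * 2 ^ (T i) * r i :=
    Finset.dvd_sum hdvd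
  have hsplit := Finset.add_sum_erase Finset.univ (fun i => ε i * 2 ^ (T i) * r i)
      (Finset.mem_univ i₀)
  rw [hsum] at hsplit
  have h2 : (2:ℤ) ^ (T i₀ + t i₀) ∣ ε i₀ * 2 ^ (T i₀) * r i₀ := by
    have : ε i₀ * 2 ^ (T i₀) * r i₀ =
        -∑ i ∈ Finset.univ.erase i₀, ε i * 2 ^ (T i) * r i := by linarith
    rw [this]
    exact dvd_neg.mpr h1
  have h3 : (2:ℤ) ^ (T i₀ + t i₀) ∣ 2 ^ (T i₀) * r i₀ := by
    rcases hε i₀ with he | he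
    · rwa [he, one_mul] at h2
    · rw [he, neg_mul, neg_mul, dvd_neg, one_mul] at h2; exact h2
  have h4 : (2:ℤ) ^ (t i₀) ∣ r i₀ := by
    rw [pow_add] at h3
    exact (mul_dvd_mul_iff_left (a := (2:ℤ) ^ (T i₀)) (by positivity)).mp h3
  exact h0 (Int.eq_zero_of_abs_lt_dvd h4 (by exact_mod_cast hr i₀))

/-- The minimum distance of the received superimposed constellation of the proposed
coded-modulation scheme is at least `√3`. -/
theorem superimposed_min_distance (K : ℕ) (hK : 1 ≤ K)
    (h P : Fin K → ℝ) (hh : ∀ i, h i ≠ 0) (hP : ∀ i, 0 < P i)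
    (s : Fin K → ℝ) (hs : ∀ i, s i = Real.logb 2 ((h i) ^ 2 * P i))
    (n : Fin K → ℕ) (hanti : ∀ i j : Fin K, i ≤ j → n j ≤ n i)
    (hn : ∀ i, (n i : ℝ) ≤ s i + 1)
    (t : Fin K → ℕ) (ht : ∀ i, 1 ≤ t i)
    (m : Fin K → ℕ) (hm : ∀ i, m i = 2 * t i)
    (hrate : ∀ j : Fin K, (∑ i ∈ Finset.Ici j, m i) ≤ n j)
    (E : Fin K → ℝ)
    (hE : ∀ j, E j = (2 : ℝ) ^ (((n ⟨0, hK⟩ : ℕ) : ℝ) - s j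
        + ((∑ i ∈ Finset.Ioi j, m i : ℕ) : ℝ)) * ((2 : ℝ) ^ m j - 1) / 6)
    (η : ℝ)
    (hη : η = 1 / Real.sqrt (Finset.univ.sup' ⟨⟨0, hK⟩, Finset.mem_univ _⟩ E))
    (x x' : Fin K → ℂ)
    (hx : ∀ i, x i ∈ QAM (t i) 1) (hx' : ∀ i, x' i ∈ QAM (t i) 1)
    (hne : x ≠ x') :
    Real.sqrt 3 ≤ ‖(∑ i, ((h i * Real.sqrt (P i) * η *
        (2 : ℝ) ^ ((((n ⟨0, hK⟩ : ℕ) : ℝ) - s i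
          + ((∑ i' ∈ Finset.Ioi i, m i' : ℕ) : ℝ)) / 2) : ℝ) : ℂ)
      * (x i - x' i))‖ := by
  classical
  simp only [QAM, Set.mem_setOf_eq] at hx hx'
  choose a ha b hb hxeq using hx
  choose a' ha' b' hb' hx'eq using hx'
  set N : ℝ := ((n ⟨0, hK⟩ : ℕ) : ℝ) with hN
  set r : Fin K → ℤ := fun i => (a i : ℤ) - (a' i : ℤ) with hrdef
  set q : Fin K → ℤ := fun i => (b i : ℤ) - (b' i : ℤ) with hqdef
  set ε : Fin K → ℤ := fun i => if 0 < h i then 1 else -1 with hεdef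
  set T : Fin K → ℕ := fun i => ∑ i' ∈ Finset.Ioi i, t i' with hTdef
  -- difference of constellation points
  have hd : ∀ i, x i - x' i = (r i : ℂ) + (q i : ℂ) * Complex.I := by
    intro i
    rw [hxeq i, hx'eq i, hrdef, hqdef]
    push_cast
    ring
  have hrabs : ∀ i, |r i| < 2 ^ (t i) := by
    intro i
    have h1 : (a i : ℤ) < 2 ^ (t i) := by exact_mod_cast ha i
    have h2 : (a' i : ℤ) < 2 ^ (t i) := by exact_mod_cast ha' i
    have h3 : (0:ℤ) ≤ (a i : ℤ) := Int.natCast_nonneg _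
    have h4 : (0:ℤ) ≤ (a' i : ℤ) := Int.natCast_nonneg _
    rw [hrdef, abs_lt]
    constructor <;> simp only <;> linarith
  have hqabs : ∀ i, |q i| < 2 ^ (t i) := by
    intro i
    have h1 : (b i : ℤ) < 2 ^ (t i) := by exact_mod_cast hb i
    have h2 : (b' i : ℤ) < 2 ^ (t i) := by exact_mod_cast hb' i
    have h3 : (0:ℤ) ≤ (b i : ℤ) := Int.natCast_nonneg _
    have h4 : (0:ℤ) ≤ (b' i : ℤ) := Int.natCast_nonneg _
    rw [hqdef, abs_lt]
    constructor <;> simp only <;> linarith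
  have hεpm : ∀ i, ε i = 1 ∨ ε i = -1 := by
    intro i
    simp only [hεdef]
    split_ifs <;> simp
  -- sum of the Ioi modulation orders
  have hMT : ∀ i, ((∑ i' ∈ Finset.Ioi i, m i' : ℕ) : ℝ) = 2 * (T i : ℝ) := by
    intro i
    have : ∑ i' ∈ Finset.Ioi i, m i' = 2 * T i := by
      rw [hTdef, Finset.mul_sum]
      exact Finset.sum_congr rfl fun i' _ => hm i'
    rw [this]
    push_cast
    ring
  set w : ℝ := η * (2:ℝ) ^ (N / 2) with hwdef
  -- the coefficient simplification
  have hcoef : ∀ i, h i * Real.sqrt (P i) * η *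
      (2 : ℝ) ^ ((N - s i + ((∑ i' ∈ Finset.Ioi i, m i' : ℕ) : ℝ)) / 2)
      = (ε i : ℝ) * w * 2 ^ (T i) := by
    intro i
    have hpos : 0 < h i ^ 2 * P i :=
      mul_pos (lt_of_le_of_ne (sq_nonneg _) (Ne.symm (pow_ne_zero 2 (hh i)))) (hP i)
    have h2s : (2:ℝ) ^ (s i) = h i ^ 2 * P i := by
      rw [hs i]
      exact Real.rpow_logb (by norm_num) (by norm_num) hpos
    have hsqrt2s : (2:ℝ) ^ (s i / 2) = |h i| * Real.sqrt (P i) := by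
      rw [show s i / 2 = s i * (1/2) by ring, Real.rpow_mul (by norm_num),
        ← Real.sqrt_eq_rpow, h2s, Real.sqrt_mul (sq_nonneg _), Real.sqrt_sq_eq_abs]
    have hhe : h i = (ε i : ℝ) * |h i| := by
      simp only [hεdef]
      split_ifs with hhi
      · rw [abs_of_pos hhi]; push_cast; ring
      · have hneg : h i < 0 := lt_of_le_of_ne (not_lt.mp hhi) (hh i)
        rw [abs_of_neg hneg]; push_cast; ring
    rw [hMT i]
    have e1 : (N - s i + 2 * (T i : ℝ)) / 2 = N / 2 + (-(s i / 2) + (T i : ℝ)) := by ring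
    rw [e1, Real.rpow_add (by norm_num : (0:ℝ) < 2),
      Real.rpow_add (by norm_num : (0:ℝ) < 2),
      Real.rpow_neg (by norm_num : (0:ℝ) ≤ 2), hsqrt2s, Real.rpow_natCast]
    have habs : |h i| ≠ 0 := abs_ne_zero.mpr (hh i)
    have hsq : Real.sqrt (P i) ≠ 0 := ne_of_gt (Real.sqrt_pos.mpr (hP i))
    rw [hwdef]
    nth_rewrite 1 [hhe]
    field_simp
  -- the integer parts of the superposition
  set A : ℤ := ∑ i, ε i * 2 ^ (T i) * r i with hAdef
  set B : ℤ := ∑ i, ε i * 2 ^ (T i) * q i with hBdef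
  have hsum : (∑ i, ((h i * Real.sqrt (P i) * η *
      (2 : ℝ) ^ ((N - s i + ((∑ i' ∈ Finset.Ioi i, m i' : ℕ) : ℝ)) / 2) : ℝ) : ℂ)
      * (x i - x' i)) = (w : ℂ) * ((A : ℂ) + (B : ℂ) * Complex.I) := by
    have hterm : ∀ i ∈ Finset.univ, ((h i * Real.sqrt (P i) * η *
        (2 : ℝ) ^ ((N - s i + ((∑ i' ∈ Finset.Ioi i, m i' : ℕ) : ℝ)) / 2) : ℝ) : ℂ)
        * (x i - x' i)
        = (w : ℂ) * (((ε i * 2 ^ (T i) * r i : ℤ) : ℂ)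
          + ((ε i * 2 ^ (T i) * q i : ℤ) : ℂ) * Complex.I) := by
      intro i _
      rw [hcoef i, hd i]
      push_cast
      ring
    rw [Finset.sum_congr rfl hterm, ← Finset.mul_sum]
    congr 1
    rw [Finset.sum_add_distrib, ← Finset.sum_mul, hAdef, hBdef]
    push_cast
    ring
  -- positivity and bound for the sup
  have hEpos : ∀ j, 0 < E j := by
    intro j
    rw [hE j]
    have h1 : (1:ℝ) < 2 ^ (m j) := one_lt_pow₀ (by norm_num) (by rw [hm j]; have := ht j; omega)
    apply div_pos (mul_pos (Real.rpow_pos_of_pos (by norm_num) _) (by linarith)) (by norm_num)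
  have hEle : ∀ j, E j ≤ (2:ℝ) ^ N / 3 := by
    intro j
    rw [hE j]
    have hIci : ∑ i ∈ Finset.Ici j, m i = m j + ∑ i ∈ Finset.Ioi j, m i := by
      rw [show Finset.Ici j = insert j (Finset.Ioi j) by
        ext k
        simp only [Finset.mem_Ici, Finset.mem_insert, Finset.mem_Ioi, Fin.le_def, Fin.lt_def]
        omega, Finset.sum_insert (by simp)]
    have hrate' : ((∑ i ∈ Finset.Ioi j, m i : ℕ) : ℝ) + (m j : ℝ) ≤ (n j : ℝ) := by
      have h5 : m j + ∑ i ∈ Finset.Ioi j, m i ≤ n j := by rw [← hIci]; exact hrate j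
      have h6 := (Nat.cast_le (α := ℝ)).mpr h5
      push_cast at h6 ⊢
      linarith
    have hexp : N - s j + ((∑ i ∈ Finset.Ioi j, m i : ℕ) : ℝ) + (m j : ℝ) ≤ N + 1 := by
      linarith [hn j]
    calc (2:ℝ) ^ (N - s j + ((∑ i ∈ Finset.Ioi j, m i : ℕ) : ℝ)) * ((2:ℝ) ^ (m j) - 1) / 6
        ≤ (2:ℝ) ^ (N - s j + ((∑ i ∈ Finset.Ioi j, m i : ℕ) : ℝ)) * (2:ℝ) ^ (m j) / 6 := by
          gcongr <;> first | positivity | linarith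
      _ = (2:ℝ) ^ (N - s j + ((∑ i ∈ Finset.Ioi j, m i : ℕ) : ℝ) + (m j : ℝ)) / 6 := by
          rw [← Real.rpow_natCast 2 (m j), ← Real.rpow_add (by norm_num : (0:ℝ) < 2)]
      _ ≤ (2:ℝ) ^ (N + 1) / 6 := by
          gcongr <;> first | norm_num | linarith [hexp]
      _ = (2:ℝ) ^ N / 3 := by
          rw [Real.rpow_add (by norm_num : (0:ℝ) < 2), Real.rpow_one]
          ring
  have hsup_pos : 0 < Finset.univ.sup' ⟨⟨0, hK⟩, Finset.mem_univ _⟩ E :=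
    lt_of_lt_of_le (hEpos ⟨0, hK⟩) (Finset.le_sup' E (Finset.mem_univ _))
  have hsup_le : Finset.univ.sup' ⟨⟨0, hK⟩, Finset.mem_univ _⟩ E ≤ (2:ℝ) ^ N / 3 :=
    Finset.sup'_le _ _ fun j _ => hEle j
  -- √3 ≤ w
  have hs3 : (0:ℝ) < Real.sqrt 3 := Real.sqrt_pos.mpr (by norm_num)
  have hsqN : Real.sqrt ((2:ℝ) ^ N / 3) = (2:ℝ) ^ (N / 2) / Real.sqrt 3 := by
    have h1 : ((2:ℝ) ^ (N / 2)) ^ 2 = 2 ^ N := by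
      rw [← Real.rpow_natCast ((2:ℝ) ^ (N / 2)) 2, ← Real.rpow_mul (by norm_num)]
      norm_num
    rw [show (2:ℝ) ^ N / 3 = ((2:ℝ) ^ (N / 2)) ^ 2 / 3 by rw [h1],
      Real.sqrt_div (by positivity), Real.sqrt_sq (by positivity)]
  have hEs : (0:ℝ) < Real.sqrt (Finset.univ.sup' ⟨⟨0, hK⟩, Finset.mem_univ _⟩ E) :=
    Real.sqrt_pos.mpr hsup_pos
  have hsE : Real.sqrt (Finset.univ.sup' ⟨⟨0, hK⟩, Finset.mem_univ _⟩ E)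
      ≤ (2:ℝ) ^ (N / 2) / Real.sqrt 3 := by
    rw [← hsqN]
    exact Real.sqrt_le_sqrt hsup_le
  have hw3 : Real.sqrt 3 ≤ w := by
    rw [hwdef, hη, one_div, ← div_eq_inv_mul, le_div_iff₀ hEs]
    have h2 : Real.sqrt 3 * ((2:ℝ) ^ (N / 2) / Real.sqrt 3) = (2:ℝ) ^ (N / 2) := by
      field_simp
    calc Real.sqrt 3 * Real.sqrt (Finset.univ.sup' ⟨⟨0, hK⟩, Finset.mem_univ _⟩ E)
        ≤ Real.sqrt 3 * ((2:ℝ) ^ (N / 2) / Real.sqrt 3) := by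
          exact mul_le_mul_of_nonneg_left hsE (le_of_lt hs3)
      _ = (2:ℝ) ^ (N / 2) := h2
  have hwpos : 0 < w := lt_of_lt_of_le hs3 hw3
  -- (A, B) ≠ (0, 0)
  have hAB : A ≠ 0 ∨ B ≠ 0 := by
    have hxne : ∃ i, x i ≠ x' i := by
      by_contra hc
      push_neg at hc
      exact hne (funext hc)
    obtain ⟨i₂, hi₂⟩ := hxne
    set S : Finset (Fin K) := Finset.univ.filter (fun i => r i ≠ 0 ∨ q i ≠ 0) with hSdef
    have hSne : S.Nonempty := by
      refine ⟨i₂, ?_⟩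
      rw [hSdef, Finset.mem_filter]
      refine ⟨Finset.mem_univ _, ?_⟩
      by_contra hc
      push_neg at hc
      apply hi₂
      have := hd i₂
      rw [hc.1, hc.2] at this
      simp at this
      exact sub_eq_zero.mp this
    set i₀ := S.max' hSne with hi₀
    have hmem : i₀ ∈ Finset.univ ∧ (r i₀ ≠ 0 ∨ q i₀ ≠ 0) :=
      Finset.mem_filter.mp (S.max'_mem hSne)
    have hmaxr : ∀ i, i₀ < i → r i = 0 ∧ q i = 0 := by
      intro i hi
      by_contra hc
      push_neg at hc
      have hiS : i ∈ S := by
        rw [hSdef, Finset.mem_filter]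
        refine ⟨Finset.mem_univ _, ?_⟩
        by_contra hc2
        push_neg at hc2
        exact (hc hc2.1) hc2.2
      exact absurd (S.le_max' i hiS) (not_le.mpr hi)
    rcases hmem.2 with hr0 | hq0
    · left
      rw [hAdef]
      exact digits_ne_zero t ε r hεpm hrabs i₀ hr0 (fun i hi => (hmaxr i hi).1)
    · right
      rw [hBdef]
      exact digits_ne_zero t ε q hεpm hqabs i₀ hq0 (fun i hi => (hmaxr i hi).2)
  have habs1 : 1 ≤ ‖(A : ℂ) + (B : ℂ) * Complex.I‖ := by
    have h1le : (1:ℝ) ≤ (A:ℝ) ^ 2 + (B:ℝ) ^ 2 := by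
      have : (1:ℤ) ≤ A ^ 2 + B ^ 2 := by
        rcases hAB with hA | hB
        · nlinarith [Int.one_le_abs hA, sq_abs A, sq_nonneg B, abs_nonneg A]
        · nlinarith [Int.one_le_abs hB, sq_abs B, sq_nonneg A, abs_nonneg B]
      exact_mod_cast this
    rw [Complex.norm_def, Complex.normSq_apply]
    simp only [Complex.add_re, Complex.add_im, Complex.mul_re, Complex.mul_im,
      Complex.intCast_re, Complex.intCast_im, Complex.I_re, Complex.I_im]
    exact (Real.le_sqrt' one_pos).mpr (by nlinarith [h1le])
  -- conclude
  rw [hsum, norm_mul, Complex.norm_real, Real.norm_eq_abs, abs_of_pos hwpos]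
  calc Real.sqrt 3 ≤ w := hw3
    _ = w * 1 := (mul_one w).symm
    _ ≤ w * ‖(A : ℂ) + (B : ℂ) * Complex.I‖ :=
        mul_le_mul_of_nonneg_left habs1 (le_of_lt hwpos)
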